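/- For γ ∈ [3,5], φ(γ) ≥ γ·(2/3)^{(γ-1)/2} ≥ 2, and by the recursion φ(γ+2) = 1 + ((γ+1)/(2γ))φ(γ) one obtains φ(γ) ≥ 2 for all γ ≥ 3. -/

import Mathlib

open Real MeasureTheory
open Set Filter Topology

lemma aux_deriv (p : ℝ) (hp : p ≠ -1) (x : ℝ) (hx : x ∈ Ici (0:ℝ)) :
    HasDerivAt (fun s : ℝ => (s+1)^(p+1)/(p+1)) ((x+1)^p) x := by
  have hx1 : (0:ℝ) < x + 1 := by simp at hx; linarith
  have h1 : HasDerivAt (fun s : ℝ => s + 1) 1 x := (hasDerivAt_id x).add_const 1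
  have h2 := (Real.hasDerivAt_rpow_const (x := x+1) (p := p+1) (Or.inl hx1.ne')).comp x h1
  have := h2.div_const (p+1)
  refine this.congr_deriv ?_
  have : p + 1 ≠ 0 := by intro h; apply hp; linarith
  field_simp
  rw [add_sub_cancel_right]

lemma aux_tendsto (q : ℝ) (hq : q < 0) :
    Tendsto (fun s : ℝ => (s+1)^q) atTop (𝓝 0) := by
  have h1 : Tendsto (fun s : ℝ => s + 1) atTop atTop :=
    tendsto_atTop_add_const_right _ 1 tendsto_id
  have h2 : Tendsto (fun t : ℝ => t ^ q) atTop (𝓝 0) := by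
    simpa only [neg_neg] using tendsto_rpow_neg_atTop (by linarith : 0 < -q)
  exact h2.comp h1

lemma J_integrable (p : ℝ) (hp : p < -1) :
    IntegrableOn (fun s : ℝ => (s+1)^p) (Ioi 0) := by
  refine integrableOn_Ioi_deriv_of_nonneg' (l := 0) (fun x hx => aux_deriv p hp.ne x hx) ?_ ?_
  · intro x hx
    have : (0:ℝ) < x + 1 := by simp at hx; linarith
    positivity
  · simpa using (aux_tendsto (p+1) (by linarith)).div_const (p+1)

lemma J_value (p : ℝ) (hp : p < -1) :
    ∫ s in Ioi (0:ℝ), (s+1)^p = -1/(p+1) := by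
  have := integral_Ioi_of_hasDerivAt_of_tendsto' (fun x hx => aux_deriv p hp.ne x hx) (J_integrable p hp)
    ((aux_tendsto (p+1) (by linarith)).div_const (p+1))
  simp only [zero_add, Real.one_rpow] at this
  rw [this]; ring

lemma I_meas (a b : ℝ) :
    AEStronglyMeasurable (fun s : ℝ => (s+1)^a * (s+2)^b) (volume.restrict (Ioi 0)) := by
  refine (ContinuousOn.mul ?_ ?_).aestronglyMeasurable measurableSet_Ioi
  · exact ContinuousOn.rpow_const (by fun_prop) (fun x hx => Or.inl (by simp at hx; positivity))
  · exact ContinuousOn.rpow_const (by fun_prop) (fun x hx => Or.inl (by simp at hx; positivity))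

lemma I_integrable (γ : ℝ) (hγ : 1 ≤ γ) :
    IntegrableOn (fun s : ℝ => (s+1)^(-(γ+2)/2) * (s+2)^((γ-1)/2)) (Ioi 0) := by
  refine Integrable.mono' ((J_integrable (-3/2) (by norm_num)).const_mul (2^((γ-1)/2))) (I_meas _ _) ?_
  filter_upwards [ae_restrict_mem measurableSet_Ioi] with s hs
  simp only [mem_Ioi] at hs
  have h1 : (0:ℝ) < s + 1 := by linarith
  have h2 : (0:ℝ) < s + 2 := by linarith
  rw [Real.norm_eq_abs, abs_of_nonneg (by positivity)]
  have hb : (s+2)^((γ-1)/2) ≤ (2*(s+1))^((γ-1)/2) :=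
    Real.rpow_le_rpow h2.le (by linarith) (by linarith)
  calc (s+1)^(-(γ+2)/2) * (s+2)^((γ-1)/2)
      ≤ (s+1)^(-(γ+2)/2) * (2*(s+1))^((γ-1)/2) := by
        exact mul_le_mul_of_nonneg_left hb (by positivity)
    _ = 2^((γ-1)/2) * (s+1)^(-3/2 : ℝ) := by
        rw [Real.mul_rpow (by norm_num) h1.le, ← mul_assoc, mul_comm ((s+1)^(-(γ+2)/2)),
          mul_assoc, ← Real.rpow_add h1]
        norm_num
        exact Or.inl (by congr 1; ring)

lemma pointwise (θ s : ℝ) (hθ : 1 ≤ θ) (hs : 0 < s) :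
    (4/3)^θ * ((1-θ)*(s+1)^(-3/2 : ℝ) + (3*θ/4)*((s+1)^(-3/2:ℝ) + (s+1)^(-5/2:ℝ)))
      ≤ (s+1)^(-θ-3/2) * (s+2)^θ := by
  have h1 : (0:ℝ) < s + 1 := by linarith
  have h2 : (0:ℝ) < s + 2 := by linarith
  set x := (3/4)*((s+2)/(s+1)) - 1 with hxdef
  have hx : -1 ≤ x := by
    have : 0 < (3/4)*((s+2)/(s+1)) := by positivity
    simp only [hxdef]; linarith
  have key := one_add_mul_self_le_rpow_one_add hx hθ
  have h1x : 1 + x = (3/4)*((s+2)/(s+1)) := by rw [hxdef]; ring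
  have hrw : (1+x)^θ = (3/4)^θ * ((s+2)^θ * ((s+1)^θ)⁻¹) := by
    rw [h1x, Real.mul_rpow (by norm_num) (by positivity), Real.div_rpow h2.le h1.le]
    ring
  rw [hrw] at key
  have hc : (0:ℝ) < (4/3)^θ * (s+1)^(-3/2:ℝ) := by positivity
  have key2 := mul_le_mul_of_nonneg_left key hc.le
  have e1 : (s+1)^(-3/2:ℝ) = (s+1)^(-5/2:ℝ) * (s+1) := by
    rw [show (-3/2:ℝ) = -5/2 + 1 by norm_num, Real.rpow_add_one h1.ne']
  calc (4/3)^θ * ((1-θ)*(s+1)^(-3/2 : ℝ) + (3*θ/4)*((s+1)^(-3/2:ℝ) + (s+1)^(-5/2:ℝ)))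
      = ((4/3)^θ * (s+1)^(-3/2:ℝ)) * (1 + θ * x) := by
        have hne : (s+1) ≠ 0 := h1.ne'
        have hdiv : (s+2)/(s+1)*(s+1) = s+2 := div_mul_cancel₀ _ hne
        rw [hxdef, e1]
        linear_combination (-(3/4*(4/3:ℝ)^θ * (s+1)^(-5/2:ℝ) * θ)) * hdiv
    _ ≤ ((4/3)^θ * (s+1)^(-3/2:ℝ)) * ((3/4)^θ * ((s+2)^θ * ((s+1)^θ)⁻¹)) := key2
    _ = (s+1)^(-θ-3/2) * (s+2)^θ := by
        have e2 : (s+1)^(-θ-3/2:ℝ) = (s+1)^(-3/2:ℝ) * ((s+1)^θ)⁻¹ := by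
          rw [← Real.rpow_neg h1.le, ← Real.rpow_add h1]; congr 1; ring
        have e3 : ((4:ℝ)/3)^θ * (3/4)^θ = 1 := by
          rw [← Real.mul_rpow (by norm_num) (by norm_num)]; norm_num
        rw [e2]
        linear_combination ((s+1)^(-3/2:ℝ) * (s+2)^θ * ((s+1)^θ)⁻¹) * e3

lemma I_lower (γ : ℝ) (hγ : 3 ≤ γ) :
    2 * (4/3)^((γ-1)/2) ≤ ∫ s in Ioi (0:ℝ), (s+1)^(-(γ+2)/2) * (s+2)^((γ-1)/2) := by
  have hθ : 1 ≤ (γ-1)/2 := by linarith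
  have Jf := J_integrable (-3/2) (by norm_num)
  have Jg := J_integrable (-5/2) (by norm_num)
  have hmono : (∫ s in Ioi (0:ℝ), (4/3)^((γ-1)/2) * ((1-(γ-1)/2)*(s+1)^(-3/2:ℝ)
        + (3*((γ-1)/2)/4)*((s+1)^(-3/2:ℝ) + (s+1)^(-5/2:ℝ))))
      ≤ ∫ s in Ioi (0:ℝ), (s+1)^(-(γ+2)/2) * (s+2)^((γ-1)/2) := by
    refine setIntegral_mono_on ?_ (I_integrable γ (by linarith)) measurableSet_Ioi ?_
    · exact (((Jf.const_mul _).add ((Jf.add Jg).const_mul _)).const_mul _)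
    · intro s hs
      simp only [mem_Ioi] at hs
      have h := pointwise ((γ-1)/2) s hθ hs
      rwa [show -((γ-1)/2)-3/2 = -(γ+2)/2 by ring] at h
  refine le_trans (le_of_eq ?_) hmono
  have Ia : Integrable (fun s : ℝ => (1-(γ-1)/2)*(s+1)^(-3/2:ℝ)) (volume.restrict (Ioi 0)) :=
    Jf.const_mul _
  have Ib : Integrable (fun s : ℝ => (3*((γ-1)/2)/4)*((s+1)^(-3/2:ℝ) + (s+1)^(-5/2:ℝ)))
      (volume.restrict (Ioi 0)) := by
    simpa using (Jf.add Jg).const_mul (3*((γ-1)/2)/4)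
  rw [integral_const_mul, integral_add Ia Ib, integral_const_mul, integral_const_mul,
    integral_add Jf Jg, J_value _ (by norm_num), J_value _ (by norm_num)]
  norm_num
  ring

lemma I_rec (γ : ℝ) (hγ : 3 ≤ γ) :
    ((γ+2)/2) * (∫ s in Ioi (0:ℝ), (s+1)^(-(γ+2+2)/2) * (s+2)^((γ+2-1)/2))
      = 2^((γ+1)/2) + ((γ+1)/2) * ∫ s in Ioi (0:ℝ), (s+1)^(-(γ+2)/2) * (s+2)^((γ-1)/2) := by
  have hderiv : ∀ x ∈ Ici (0:ℝ), HasDerivAt (fun s : ℝ => (s+1)^(-(γ+2)/2) * (s+2)^((γ+1)/2))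
      (-((γ+2)/2)*((x+1)^(-(γ+2+2)/2) * (x+2)^((γ+2-1)/2))
        + ((γ+1)/2)*((x+1)^(-(γ+2)/2) * (x+2)^((γ-1)/2))) x := by
    intro x hx
    simp only [mem_Ici] at hx
    have hx1 : (0:ℝ) < x + 1 := by linarith
    have hx2 : (0:ℝ) < x + 2 := by linarith
    have d1 := (Real.hasDerivAt_rpow_const (x := x+1) (p := -(γ+2)/2)
      (Or.inl hx1.ne')).comp x ((hasDerivAt_id x).add_const 1)
    have d2 := (Real.hasDerivAt_rpow_const (x := x+2) (p := (γ+1)/2)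
      (Or.inl hx2.ne')).comp x ((hasDerivAt_id x).add_const 2)
    have := d1.mul d2
    refine this.congr_deriv ?_
    rw [show -(γ+2+2)/2 = -(γ+2)/2 - 1 by ring, show (γ+2-1)/2 = (γ+1)/2 by ring,
      show (γ-1)/2 = (γ+1)/2 - 1 by ring]
    simp only [Function.comp, id_eq]
    ring
  have f'int : IntegrableOn (fun x : ℝ =>
      -((γ+2)/2)*((x+1)^(-(γ+2+2)/2) * (x+2)^((γ+2-1)/2))
        + ((γ+1)/2)*((x+1)^(-(γ+2)/2) * (x+2)^((γ-1)/2))) (Ioi 0) :=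
    ((I_integrable (γ+2) (by linarith)).const_mul _).add ((I_integrable γ (by linarith)).const_mul _)
  have htend : Tendsto (fun s : ℝ => (s+1)^(-(γ+2)/2) * (s+2)^((γ+1)/2)) atTop (𝓝 0) := by
    have hup : ∀ᶠ s : ℝ in atTop, (s+1)^(-(γ+2)/2) * (s+2)^((γ+1)/2)
        ≤ 2^((γ+1)/2) * (s+1)^(-1/2 : ℝ) := by
      filter_upwards [eventually_ge_atTop (0:ℝ)] with s hs
      have h1 : (0:ℝ) < s + 1 := by linarith
      have h2 : (0:ℝ) < s + 2 := by linarith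
      have hb : (s+2)^((γ+1)/2) ≤ (2*(s+1))^((γ+1)/2) :=
        Real.rpow_le_rpow h2.le (by linarith) (by linarith)
      calc (s+1)^(-(γ+2)/2) * (s+2)^((γ+1)/2)
          ≤ (s+1)^(-(γ+2)/2) * (2*(s+1))^((γ+1)/2) :=
            mul_le_mul_of_nonneg_left hb (by positivity)
        _ = 2^((γ+1)/2) * (s+1)^(-1/2 : ℝ) := by
            rw [Real.mul_rpow (by norm_num) h1.le, ← mul_assoc, mul_comm ((s+1)^(-(γ+2)/2)),
              mul_assoc, ← Real.rpow_add h1]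
            norm_num
            exact Or.inl (by congr 1; ring)
    have hlo : ∀ᶠ s : ℝ in atTop, (0:ℝ) ≤ (s+1)^(-(γ+2)/2) * (s+2)^((γ+1)/2) := by
      filter_upwards [eventually_ge_atTop (0:ℝ)] with s hs
      have h1 : (0:ℝ) < s + 1 := by linarith
      have h2 : (0:ℝ) < s + 2 := by linarith
      positivity
    have hub : Tendsto (fun s : ℝ => 2^((γ+1)/2) * (s+1)^(-1/2 : ℝ)) atTop (𝓝 0) := by
      simpa using (aux_tendsto (-1/2) (by norm_num)).const_mul (2^((γ+1)/2) : ℝ)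
    exact tendsto_of_tendsto_of_tendsto_of_le_of_le' tendsto_const_nhds hub hlo hup
  have key := integral_Ioi_of_hasDerivAt_of_tendsto' hderiv f'int htend
  rw [integral_add ((I_integrable (γ+2) (by linarith)).const_mul _)
    ((I_integrable γ (by linarith)).const_mul _), integral_const_mul, integral_const_mul] at key
  simp only [zero_add, Real.one_rpow, one_mul] at key
  linarith [key]

lemma phi_rec (φ : ℝ → ℝ)
    (hφ : ∀ g : ℝ, φ g = 2 ^ ((1 - g) / 2) * (g / 2) *
      ∫ s in Set.Ioi (0 : ℝ), (s + 1) ^ (-(g + 2) / 2) * (s + 2) ^ ((g - 1) / 2))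
    (γ : ℝ) (hγ : 3 ≤ γ) : φ (γ+2) = 1 + ((γ+1)/(2*γ)) * φ γ := by
  have hγ0 : γ ≠ 0 := by linarith
  have key := I_rec γ hγ
  rw [hφ, hφ]
  set A := ∫ s in Ioi (0:ℝ), (s+1)^(-(γ+2+2)/2) * (s+2)^((γ+2-1)/2) with hA
  set B := ∫ s in Ioi (0:ℝ), (s+1)^(-(γ+2)/2) * (s+2)^((γ-1)/2) with hB
  have E1 : (2:ℝ)^((1-(γ+2))/2) * 2^((γ+1)/2) = 1 := by
    rw [← Real.rpow_add (by norm_num : (0:ℝ) < 2), show (1-(γ+2))/2 + (γ+1)/2 = 0 by ring,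
      Real.rpow_zero]
  have E2 : (2:ℝ)^((1-γ)/2) = 2^((1-(γ+2))/2) * 2 := by
    rw [show (1-γ)/2 = (1-(γ+2))/2 + 1 by ring, Real.rpow_add (by norm_num : (0:ℝ) < 2),
      Real.rpow_one]
  have hmain : (2:ℝ)^((1-(γ+2))/2) * ((γ+2)/2) * A
      = 2^((1-(γ+2))/2) * (2^((γ+1)/2) + ((γ+1)/2) * B) := by
    rw [mul_assoc, key]
  calc 2^((1-(γ+2))/2) * ((γ+2)/2) * A
      = 2^((1-(γ+2))/2) * (2^((γ+1)/2) + ((γ+1)/2) * B) := hmain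
    _ = 1 + ((γ+1)/(2*γ)) * (2^((1-γ)/2) * (γ/2) * B) := by
        rw [E2]
        field_simp
        linear_combination 2 * E1

lemma chord (u : ℝ) (h1 : 1 ≤ u) (h2 : u ≤ 2) :
    (3/2:ℝ)^u ≤ (2-u)*(3/2) + (u-1)*(9/4) := by
  have hc := convexOn_exp.2 (Set.mem_univ (Real.log (3/2))) (Set.mem_univ (2*Real.log (3/2)))
    (by linarith : (0:ℝ) ≤ 2-u) (by linarith : (0:ℝ) ≤ u-1) (by ring : (2-u)+(u-1) = 1)
  simp only [smul_eq_mul] at hc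
  have e0 : (2-u)*Real.log (3/2) + (u-1)*(2*Real.log (3/2)) = u * Real.log (3/2) := by ring
  have e1 : Real.exp (u * Real.log (3/2)) = (3/2:ℝ)^u := by
    rw [Real.rpow_def_of_pos (by norm_num : (0:ℝ) < 3/2), mul_comm]
  have e2 : Real.exp (Real.log (3/2)) = (3/2:ℝ) := Real.exp_log (by norm_num)
  have e3 : Real.exp (2*Real.log (3/2)) = 9/4 := by
    rw [show (2:ℝ)*Real.log (3/2) = Real.log (3/2) + Real.log (3/2) by ring, Real.exp_add, e2]
    norm_num
  rw [e0, e1, e2, e3] at hc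
  exact hc

lemma icc_bound (γ : ℝ) (h3 : 3 ≤ γ) (h5 : γ ≤ 5) :
    γ * (2/3)^((γ-1)/2) ≥ 2 := by
  set u := (γ-1)/2 with hu
  have hu1 : 1 ≤ u := by rw [hu]; linarith
  have hu2 : u ≤ 2 := by rw [hu]; linarith
  have hch := chord u hu1 hu2
  have hp : (0:ℝ) < (3/2:ℝ)^u := Real.rpow_pos_of_pos (by norm_num) u
  have hinv : (2/3:ℝ)^u = ((3/2:ℝ)^u)⁻¹ := by
    rw [show (2/3:ℝ) = (3/2:ℝ)⁻¹ by norm_num, Real.inv_rpow (by norm_num : (0:ℝ) ≤ 3/2)]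
  rw [ge_iff_le, hinv, ← div_eq_mul_inv, le_div_iff₀ hp]
  have : (2-u)*(3/2) + (u-1)*(9/4) = (3*γ+3)/8 := by rw [hu]; ring
  nlinarith [hch]

lemma phi_lb (φ : ℝ → ℝ)
    (hφ : ∀ g : ℝ, φ g = 2 ^ ((1 - g) / 2) * (g / 2) *
      ∫ s in Set.Ioi (0 : ℝ), (s + 1) ^ (-(g + 2) / 2) * (s + 2) ^ ((g - 1) / 2))
    (γ : ℝ) (hγ : 3 ≤ γ) : φ γ ≥ γ * (2/3)^((γ-1)/2) := by
  rw [hφ]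
  set u := (γ-1)/2 with hu
  have hpos : (0:ℝ) < 2^((1-γ)/2) * (γ/2) := by positivity
  have h1 := mul_le_mul_of_nonneg_left (I_lower γ hγ) hpos.le
  rw [← mul_assoc] at h1
  refine le_trans (le_of_eq ?_) h1
  have h2u : (2:ℝ)^u ≠ 0 := (Real.rpow_pos_of_pos two_pos u).ne'
  have h4 : (4/3:ℝ)^u = 2^u * (2/3)^u := by
    rw [show (4/3:ℝ) = 2*(2/3) by norm_num, Real.mul_rpow (by norm_num) (by norm_num)]
  have hneg : (2:ℝ)^((1-γ)/2) = (2^u)⁻¹ := by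
    rw [show (1-γ)/2 = -u by rw [hu]; ring, Real.rpow_neg (by norm_num : (0:ℝ) ≤ 2)]
  rw [hneg, h4]
  field_simp

/-- For `γ ∈ [3,5]`, `φ(γ) ≥ γ·(2/3)^{(γ-1)/2} ≥ 2`, and (via the recursion
`φ(γ+2) = 1 + ((γ+1)/(2γ))φ(γ)`) one obtains `φ(γ) ≥ 2` for all `γ ≥ 3`, where
`φ(γ) = 2^{(1-γ)/2}·(γ/2)·∫_0^∞ (s+1)^{-(γ+2)/2}(s+2)^{(γ-1)/2} ds`. -/
theorem phi_ge_two (φ : ℝ → ℝ)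
    (hφ : ∀ g : ℝ, φ g = 2 ^ ((1 - g) / 2) * (g / 2) *
      ∫ s in Set.Ioi (0 : ℝ), (s + 1) ^ (-(g + 2) / 2) * (s + 2) ^ ((g - 1) / 2)) :
    (∀ γ ∈ Set.Icc (3 : ℝ) 5,
      φ γ ≥ γ * (2 / 3) ^ ((γ - 1) / 2) ∧ γ * (2 / 3) ^ ((γ - 1) / 2) ≥ 2) ∧
    (∀ γ : ℝ, 3 ≤ γ → φ γ ≥ 2) := by
  constructor
  · intro γ hγ
    exact ⟨phi_lb φ hφ γ hγ.1, icc_bound γ hγ.1 hγ.2⟩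
  · have main : ∀ n : ℕ, ∀ γ : ℝ, 3 ≤ γ → γ ≤ 5 + 2*(n:ℝ) → 2 ≤ φ γ := by
      intro n
      induction n with
      | zero =>
        intro γ h3 h5
        simp only [Nat.cast_zero, mul_zero, add_zero] at h5
        exact le_trans (icc_bound γ h3 h5) (phi_lb φ hφ γ h3)
      | succ n ih =>
        intro γ h3 h5
        by_cases hle : γ ≤ 5 + 2*(n:ℝ)
        · exact ih γ h3 hle
        · push_neg at hle
          have hn : (0:ℝ) ≤ (n:ℝ) := Nat.cast_nonneg n
          have h3' : 3 ≤ γ - 2 := by linarith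
          have h5' : γ - 2 ≤ 5 + 2*(n:ℝ) := by
            push_cast at h5
            linarith
          have hφ2 := ih (γ-2) h3' h5'
          have hrec := phi_rec φ hφ (γ-2) h3'
          rw [show γ-2+2 = γ by ring] at hrec
          rw [hrec]
          have hd : (0:ℝ) < 2*(γ-2) := by linarith
          have hkey : 1 ≤ (γ-2+1)/(2*(γ-2)) * φ (γ-2) := by
            rw [div_mul_eq_mul_div, le_div_iff₀ hd]
            nlinarith [hφ2]
          linarith
    intro γ h3
    refine main ⌈γ⌉₊ γ h3 ?_
    have := Nat.le_ceil γ
    have h0 : (0:ℝ) ≤ (⌈γ⌉₊ : ℝ) := Nat.cast_nonneg _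
    linarith
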